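/- For every finite connected simple graph G = (V, E), rt(G) ≤ 2 · max{ rt(G, σ) : σ is a permutation of V with σ ∘ σ = id }. In other words, the routing number of G is at most twice the maximum routing number over involutions of V. (This is the combinatorial core of the lower bound doh(G) = Ω(rt(G)).) -/

import Mathlib

/-- A routing round on `G`: the swap permutation of a matching of `G`, i.e. an involution
of the vertices that moves vertices only along edges of `G`. -/
def isRound {V : Type*} (G : SimpleGraph V) (σ : Equiv.Perm V) : Prop :=
  σ * σ = 1 ∧ ∀ v : V, σ v ≠ v → G.Adj v (σ v)

/-- Composition, in order, of a list of round permutations: for `L = [σ₁, …, σₘ]`,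
`rComp L = σₘ ∘ ⋯ ∘ σ₁`. -/
def rComp {V : Type*} (L : List (Equiv.Perm V)) : Equiv.Perm V :=
  L.foldl (fun p σ => σ * p) 1

/-- `rt(G, π)`: the minimum number of routing rounds (matchings of `G`) whose swap
permutations, composed in order, realize the permutation `π`. -/
noncomputable def rtP {V : Type*} (G : SimpleGraph V) (π : Equiv.Perm V) : ℕ :=
  sInf {m | ∃ L : List (Equiv.Perm V), L.length = m ∧ (∀ σ ∈ L, isRound G σ) ∧ rComp L = π}

/-- `rt(G)`: the routing number of `G`, the maximum of `rt(G, π)` over all permutations. -/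
noncomputable def rt {V : Type*} [Fintype V] [DecidableEq V] (G : SimpleGraph V) : ℕ :=
  Finset.univ.sup (rtP G)

section Aux

variable {V : Type*}

lemma rComp_foldl (L : List (Equiv.Perm V)) (p : Equiv.Perm V) :
    L.foldl (fun p σ => σ * p) p = rComp L * p := by
  induction L generalizing p with
  | nil => simp [rComp]
  | cons σ L ih =>
      simp only [rComp, List.foldl_cons] at *
      rw [ih, ih (σ * 1)]
      group

lemma rComp_append (L₁ L₂ : List (Equiv.Perm V)) :
    rComp (L₁ ++ L₂) = rComp L₂ * rComp L₁ := by
  unfold rComp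
  rw [List.foldl_append, rComp_foldl]
  rfl

lemma rComp_cons (σ : Equiv.Perm V) (L : List (Equiv.Perm V)) :
    rComp (σ :: L) = rComp L * σ := by
  show List.foldl _ (σ * 1) L = _
  rw [rComp_foldl, mul_one]

lemma rComp_reverse (L : List (Equiv.Perm V)) (h : ∀ σ ∈ L, σ * σ = 1) :
    rComp L.reverse = (rComp L)⁻¹ := by
  induction L with
  | nil => simp [rComp]
  | cons σ L ih =>
      have hσ : σ⁻¹ = σ := by
        have := h σ (by simp)
        exact inv_eq_of_mul_eq_one_right this
      rw [List.reverse_cons, rComp_append, ih (fun τ hτ => h τ (by simp [hτ])),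
        rComp_cons σ L, mul_inv_rev, hσ]
      simp [rComp]

/-- A permutation is routable if it is realized by some sequence of rounds. -/
def Routable (G : SimpleGraph V) (π : Equiv.Perm V) : Prop :=
  ∃ L : List (Equiv.Perm V), (∀ σ ∈ L, isRound G σ) ∧ rComp L = π

lemma routable_one (G : SimpleGraph V) : Routable G 1 :=
  ⟨[], by simp, by simp [rComp]⟩

lemma Routable.mul {G : SimpleGraph V} {π ρ : Equiv.Perm V}
    (hπ : Routable G π) (hρ : Routable G ρ) : Routable G (π * ρ) := by
  obtain ⟨L₁, h₁, e₁⟩ := hπ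
  obtain ⟨L₂, h₂, e₂⟩ := hρ
  refine ⟨L₂ ++ L₁, ?_, ?_⟩
  · intro σ hσ
    rcases List.mem_append.1 hσ with h | h
    · exact h₂ σ h
    · exact h₁ σ h
  · rw [rComp_append, e₁, e₂]

lemma Routable.inv {G : SimpleGraph V} {π : Equiv.Perm V}
    (hπ : Routable G π) : Routable G π⁻¹ := by
  obtain ⟨L, h, e⟩ := hπ
  refine ⟨L.reverse, fun σ hσ => h σ (List.mem_reverse.1 hσ), ?_⟩
  rw [rComp_reverse L (fun σ hσ => (h σ hσ).1), e]

lemma isRound_swap {G : SimpleGraph V} [DecidableEq V] {u v : V} (h : G.Adj u v) :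
    isRound G (Equiv.swap u v) := by
  constructor
  · exact Equiv.swap_mul_self u v
  · intro x hx
    rcases Equiv.eq_or_eq_of_swap_apply_ne_self hx with rfl | rfl
    · rw [Equiv.swap_apply_left]; exact h
    · rw [Equiv.swap_apply_right]; exact h.symm

lemma routable_swap_of_reachable {G : SimpleGraph V} [DecidableEq V] {u v : V}
    (h : G.Reachable u v) : Routable G (Equiv.swap u v) := by
  obtain ⟨p⟩ := h
  induction p with
  | nil =>
      rw [Equiv.swap_self]
      exact routable_one G
  | @cons u w v huw p ih =>
      by_cases huv : u = v
      · subst huv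
        rw [Equiv.swap_self]
        exact routable_one G
      by_cases hwv : w = v
      · subst hwv
        exact ⟨[Equiv.swap u w], by simpa using isRound_swap huw, by simp [rComp_cons, rComp]⟩
      · have hr : Routable G (Equiv.swap u w) :=
          ⟨[Equiv.swap u w], by simpa using isRound_swap huw, by simp [rComp_cons, rComp]⟩
        have hvu : v ≠ u := fun e => huv e.symm
        have hvw : v ≠ w := fun e => hwv e.symm
        have key : Equiv.swap u v = Equiv.swap u w * Equiv.swap w v * Equiv.swap u w := by
          have h1 := Equiv.swap_apply_apply (Equiv.swap u w) w v
          rw [Equiv.swap_apply_right, Equiv.swap_apply_of_ne_of_ne hvu hvw,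
            Equiv.swap_inv] at h1
          exact h1
        rw [key]
        exact (hr.mul ih).mul hr

lemma routable_all {G : SimpleGraph V} [Fintype V] [DecidableEq V]
    (hG : G.Connected) (π : Equiv.Perm V) : Routable G π := by
  have hπ : π ∈ Subgroup.closure {σ : Equiv.Perm V | σ.IsSwap} := by
    rw [Equiv.Perm.closure_isSwap]
    trivial
  induction hπ using Subgroup.closure_induction with
  | mem σ hσ =>
      obtain ⟨a, b, hab, rfl⟩ := hσ
      exact routable_swap_of_reachable (hG.preconnected a b)
  | one => exact routable_one G
  | mul x y _ _ hx hy => exact hx.mul hy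
  | inv x _ hx => exact hx.inv

/-- Every permutation is a product of two involutions. -/
lemma exists_involution_factorization (π : Equiv.Perm V) :
    ∃ a b : Equiv.Perm V, a * a = 1 ∧ b * b = 1 ∧ π = a * b := by
  classical
  -- representative of each cycle
  let s : Setoid V := ⟨π.SameCycle, ⟨fun x => Equiv.Perm.SameCycle.refl π x,
    fun h => h.symm, fun h h' => h.trans h'⟩⟩
  let rep : V → V := fun y => Quotient.out (Quotient.mk s y)
  have hrep : ∀ y, π.SameCycle (rep y) y := fun y =>
    Quotient.exact (Quotient.out_eq (Quotient.mk s y))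
  have rep_eq : ∀ {y z : V}, π.SameCycle y z → rep y = rep z := by
    intro y z h
    show Quotient.out _ = Quotient.out _
    rw [Quotient.sound (a := y) (b := z) h]
  have appAdd : ∀ (a b : ℤ) (x : V), (π ^ (a + b)) x = (π ^ a) ((π ^ b) x) := by
    intro a b x
    rw [zpow_add]
    rfl
  -- the reversal map
  let A : V → V := fun y => ((π ^ (hrep y).choose)⁻¹ : Equiv.Perm V) (rep y)
  have hA : ∀ y, A y = (π ^ (-(hrep y).choose)) (rep y) := by
    intro y
    show ((π ^ (hrep y).choose)⁻¹ : Equiv.Perm V) (rep y) = _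
    rw [zpow_neg]
  have key : ∀ (y : V) (k : ℤ), (π ^ k) (rep y) = y → A y = (π ^ (-k)) (rep y) := by
    intro y k hk
    set k0 := (hrep y).choose with hk0
    have h0 : (π ^ k0) (rep y) = y := (hrep y).choose_spec
    rw [hA]
    calc (π ^ (-k0)) (rep y)
        = (π ^ ((-k0 + -k) + k)) (rep y) := by
          rw [show ((-k0 + -k) + k : ℤ) = -k0 by ring]
      _ = (π ^ (-k0 + -k)) ((π ^ k) (rep y)) := appAdd _ _ _
      _ = (π ^ (-k0 + -k)) ((π ^ k0) (rep y)) := by rw [hk, h0]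
      _ = (π ^ ((-k0 + -k) + k0)) (rep y) := (appAdd _ _ _).symm
      _ = (π ^ (-k)) (rep y) := by rw [show ((-k0 + -k) + k0 : ℤ) = -k by ring]
  have repA : ∀ y, rep (A y) = rep y := by
    intro y
    have h1 : π.SameCycle (rep y) (A y) := ⟨_, (hA y).symm⟩
    have h2 : π.SameCycle (A y) y := h1.symm.trans (hrep y)
    exact rep_eq h2
  have hInv : Function.Involutive A := by
    intro y
    have h0 : (π ^ (hrep y).choose) (rep y) = y := (hrep y).choose_spec
    have h1 : (π ^ (-(hrep y).choose)) (rep (A y)) = A y := by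
      rw [repA]; exact (hA y).symm
    rw [key (A y) _ h1, repA, neg_neg, h0]
  have conj : ∀ y, A (π (A y)) = π⁻¹ y := by
    intro y
    set k0 := (hrep y).choose with hk0
    have h0 : (π ^ k0) (rep y) = y := (hrep y).choose_spec
    have h1 : (π ^ (1 + -k0)) (rep (π (A y))) = π (A y) := by
      have hsame : π.SameCycle (rep y) (π (A y)) := ⟨1 + -k0, by
        rw [appAdd, ← hA, zpow_one]⟩
      have : rep (π (A y)) = rep y := rep_eq (hsame.symm.trans (hrep y))
      rw [this, appAdd, ← hA, zpow_one]
    rw [key _ _ h1]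
    have hrw : rep (π (A y)) = rep y := by
      have hsame : π.SameCycle (rep y) (π (A y)) := ⟨1 + -k0, by
        rw [appAdd, ← hA, zpow_one]⟩
      exact rep_eq (hsame.symm.trans (hrep y))
    rw [hrw]
    have : (-(1 + -k0) : ℤ) = (-1) + k0 := by ring
    rw [this, appAdd, h0, zpow_neg_one]
  let a : Equiv.Perm V := Function.Involutive.toPerm A hInv
  have ha : ∀ y, a y = A y := fun y => rfl
  have haa : a * a = 1 := by
    ext y
    simp only [Equiv.Perm.mul_apply, ha, Equiv.Perm.one_apply]
    exact hInv y
  refine ⟨a, a * π, haa, ?_, ?_⟩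
  · ext y
    simp only [Equiv.Perm.mul_apply, ha, Equiv.Perm.one_apply]
    rw [conj (π y)]
    exact Equiv.symm_apply_apply π y
  · rw [← mul_assoc, haa, one_mul]

end Aux

/-- The routing number of a connected graph is at most twice the maximum routing number over
involutions of the vertex set. -/
theorem rt_le_two_mul_sup_involutions
    {V : Type*} [Fintype V] [DecidableEq V] (G : SimpleGraph V) (hG : G.Connected) :
    rt G ≤ 2 * sSup {m | ∃ σ : Equiv.Perm V, σ * σ = 1 ∧ rtP G σ = m} := by
  set S : Set ℕ := {m | ∃ σ : Equiv.Perm V, σ * σ = 1 ∧ rtP G σ = m} with hS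
  have hfin : S.Finite := by
    apply Set.Finite.subset (Set.finite_range (rtP G))
    rintro m ⟨σ, _, h⟩
    exact ⟨σ, h⟩
  have hbdd : BddAbove S := hfin.bddAbove
  rw [rt]
  apply Finset.sup_le
  intro π _
  obtain ⟨a, b, haa, hbb, hab⟩ := exists_involution_factorization π
  have hne : ∀ σ : Equiv.Perm V,
      {m | ∃ L : List (Equiv.Perm V), L.length = m ∧ (∀ τ ∈ L, isRound G τ) ∧
        rComp L = σ}.Nonempty := by
    intro σ
    obtain ⟨L, h1, h2⟩ := routable_all hG σ
    exact ⟨L.length, L, rfl, h1, h2⟩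
  obtain ⟨La, hLa, hRa, hCa⟩ := Nat.sInf_mem (hne a)
  obtain ⟨Lb, hLb, hRb, hCb⟩ := Nat.sInf_mem (hne b)
  have hπ : rtP G π ≤ rtP G b + rtP G a := by
    apply Nat.sInf_le
    refine ⟨Lb ++ La, ?_, ?_, ?_⟩
    · rw [List.length_append, hLb, hLa]
      rfl
    · intro τ hτ
      rcases List.mem_append.1 hτ with h | h
      · exact hRb τ h
      · exact hRa τ h
    · rw [rComp_append, hCa, hCb, hab]
  have h1 : rtP G a ≤ sSup S := le_csSup hbdd ⟨a, haa, rfl⟩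
  have h2 : rtP G b ≤ sSup S := le_csSup hbdd ⟨b, hbb, rfl⟩
  omega
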